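/- Let f : 𝔽_{p^n} × 𝔽_{p^n} → ZMod (p^k) be defined by f(x₁, x₂) = p^{k−1}·Tr(α x₁ π(x₂)) + g(x₂), where α ∈ 𝔽_{p^n}^*, π is a permutation of 𝔽_{p^n}, Tr is the absolute trace 𝔽_{p^n} → 𝔽_p, and g : 𝔽_{p^n} → ZMod (p^k) is arbitrary. Then f is a generalized bent function, and for all (a₁, a₂), W_f(a₁, a₂) = p^n ζ_{p^k}^{f*(a₁,a₂)} where f*(x₁,x₂) = −p^{k−1}·Tr(x₂ π^{−1}(α^{−1} x₁)) + g(π^{−1}(α^{−1} x₁)). -/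

import Mathlib

/-- The complex primitive `m`-th root of unity `e^{2πi/m}`. -/
noncomputable def zeta (m : ℕ) : ℂ := Complex.exp (2 * Real.pi * Complex.I / m)

/-- Inner product on `(ZMod p)^n`. -/
def dot {p n : ℕ} (a x : Fin n → ZMod p) : ZMod p := ∑ i, a i * x i

/-- Walsh transform of a generalized p-ary function `f : (ZMod p)^n → ZMod (p^k)`. -/
noncomputable def walsh (p n k : ℕ) [Fact (Nat.Prime p)]
    (f : (Fin n → ZMod p) → ZMod (p ^ k)) (a : Fin n → ZMod p) : ℂ :=
  ∑ x : Fin n → ZMod p, zeta (p ^ k) ^ (f x).val * zeta p ^ ((-(dot a x)).val)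

/-- Walsh transform on `F × F` for a finite field `F` of characteristic `p`,
with inner product given by the absolute trace. -/
noncomputable def walshF (p k : ℕ) (F : Type) [Field F] [Fintype F] [Algebra (ZMod p) F]
    (f : F × F → ZMod (p ^ k)) (a : F × F) : ℂ :=
  ∑ x : F × F, zeta (p ^ k) ^ (f x).val *
    zeta p ^ ((-(Algebra.trace (ZMod p) F (a.1 * x.1) +
      Algebra.trace (ZMod p) F (a.2 * x.2))).val)

lemma zeta_prim (m : ℕ) (hm : m ≠ 0) : IsPrimitiveRoot (zeta m) m := by
  rw [zeta]; exact Complex.isPrimitiveRoot_exp m hm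

lemma pow_mod_helper {m : ℕ} (ζ : ℂ) (h : ζ ^ m = 1) (i : ℕ) : ζ ^ (i % m) = ζ ^ i := by
  conv_rhs => rw [← Nat.div_add_mod i m, pow_add, pow_mul, h, one_pow, one_mul]

lemma pow_val_add {m : ℕ} [NeZero m] (ζ : ℂ) (h : ζ ^ m = 1) (a b : ZMod m) :
    ζ ^ (a + b).val = ζ ^ a.val * ζ ^ b.val := by
  rw [ZMod.val_add, pow_mod_helper ζ h, pow_add]

lemma bridge (p k : ℕ) [Fact p.Prime] (hk : 1 ≤ k) (t : ZMod p) :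
    zeta (p ^ k) ^ ((p : ZMod (p ^ k)) ^ (k - 1) * ((t.val : ℕ) : ZMod (p ^ k))).val
      = zeta p ^ t.val := by
  have hp : p ≠ 0 := (Fact.out : p.Prime).pos.ne'
  have hK : p ^ k ≠ 0 := pow_ne_zero _ hp
  have h1 : zeta (p ^ k) ^ (p ^ k) = 1 := (zeta_prim _ hK).pow_eq_one
  have hcast : (p : ZMod (p ^ k)) ^ (k - 1) * ((t.val : ℕ) : ZMod (p ^ k))
      = ((p ^ (k - 1) * t.val : ℕ) : ZMod (p ^ k)) := by push_cast; ring
  rw [hcast, ZMod.val_natCast, pow_mod_helper _ h1, pow_mul]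
  congr 1
  rw [zeta, zeta, ← Complex.exp_nat_mul]
  congr 1
  have hpk : (p : ℂ) ^ k = (p : ℂ) ^ (k - 1) * p := by
    rw [← pow_succ, Nat.sub_add_cancel hk]
  have hp' : (p : ℂ) ≠ 0 := Nat.cast_ne_zero.mpr hp
  push_cast
  rw [hpk]
  field_simp

lemma neg_lift (p k : ℕ) [Fact p.Prime] (hk : 1 ≤ k) (t : ZMod p) :
    -((p : ZMod (p ^ k)) ^ (k - 1) * ((t.val : ℕ) : ZMod (p ^ k)))
      = (p : ZMod (p ^ k)) ^ (k - 1) * (((-t).val : ℕ) : ZMod (p ^ k)) := by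
  haveI : NeZero p := ⟨(Fact.out : p.Prime).pos.ne'⟩
  rw [neg_eq_iff_add_eq_zero]
  have hdvd : p ∣ t.val + (-t).val := by
    have : ((t.val + (-t).val : ℕ) : ZMod p) = 0 := by
      push_cast [ZMod.natCast_val, ZMod.cast_id]
      ring
    exact (ZMod.natCast_eq_zero_iff _ _).mp this
  obtain ⟨m, hm⟩ := hdvd
  have h2 : (p : ZMod (p ^ k)) ^ (k - 1) * ((t.val : ℕ) : ZMod (p ^ k))
      + (p : ZMod (p ^ k)) ^ (k - 1) * (((-t).val : ℕ) : ZMod (p ^ k))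
      = ((p ^ (k - 1) * (t.val + (-t).val) : ℕ) : ZMod (p ^ k)) := by push_cast; ring
  rw [h2, hm]
  have hpk : p ^ (k - 1) * (p * m) = p ^ k * m := by
    rw [← mul_assoc, ← pow_succ, Nat.sub_add_cancel hk]
  rw [hpk]
  push_cast
  have h3 : ((p : ZMod (p ^ k))) ^ k = 0 := by
    have := ZMod.natCast_self (p ^ k)
    push_cast at this
    exact this
  rw [h3, zero_mul]

open scoped Classical in
lemma charsum (p n : ℕ) [Fact p.Prime] (F : Type) [Field F] [Fintype F] [Algebra (ZMod p) F]
    (hcard : Fintype.card F = p ^ n) (c : F) :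
    ∑ x : F, zeta p ^ (Algebra.trace (ZMod p) F (c * x)).val
      = if c = 0 then ((p : ℂ) ^ n) else 0 := by
  haveI : NeZero p := ⟨(Fact.out : p.Prime).pos.ne'⟩
  have hp1 : zeta p ^ p = 1 := (zeta_prim p (NeZero.ne p)).pow_eq_one
  by_cases hc : c = 0
  · simp only [hc, zero_mul, map_zero, ZMod.val_zero, pow_zero, if_pos]
    rw [Finset.sum_const, Finset.card_univ, hcard]
    push_cast
    ring
  · rw [if_neg hc]
    obtain ⟨b, hb⟩ : ∃ b : F, Algebra.trace (ZMod p) F (c * b) ≠ 0 := by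
      have htr := (traceForm_nondegenerate (ZMod p) F).1 c
      simp_rw [Algebra.traceForm_apply] at htr
      by_contra! hf
      exact hc (htr hf)
    set S := ∑ x : F, zeta p ^ (Algebra.trace (ZMod p) F (c * x)).val with hS
    have key : zeta p ^ (Algebra.trace (ZMod p) F (c * b)).val * S = S := by
      rw [hS, Finset.mul_sum]
      apply Fintype.sum_equiv (Equiv.addLeft b)
      intro x
      rw [← pow_val_add _ hp1, ← map_add, ← mul_add]
      rfl
    have hne : zeta p ^ (Algebra.trace (ZMod p) F (c * b)).val ≠ 1 := by
      intro h
      have hdvd := (zeta_prim p (NeZero.ne p)).pow_eq_one_iff_dvd _ |>.mp h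
      have hlt : (Algebra.trace (ZMod p) F (c * b)).val < p := ZMod.val_lt _
      have hpos : 0 < (Algebra.trace (ZMod p) F (c * b)).val :=
        Nat.pos_of_ne_zero (fun h0 => hb (by rwa [← ZMod.val_eq_zero]))
      exact Nat.not_dvd_of_pos_of_lt hpos hlt hdvd
    have h4 := sub_eq_zero.mpr key
    rw [← sub_one_mul] at h4
    rcases mul_eq_zero.mp h4 with h | h
    · exact absurd (sub_eq_zero.mp h) hne
    · exact h

theorem stmt9 (p n k : ℕ) [Fact (Nat.Prime p)] (hn : 1 ≤ n) (hk : 1 ≤ k)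
    (F : Type) [Field F] [Fintype F] [Algebra (ZMod p) F]
    (hcard : Fintype.card F = p ^ n)
    (α : F) (hα : α ≠ 0) (π : Equiv.Perm F) (g : F → ZMod (p ^ k))
    (f : F × F → ZMod (p ^ k))
    (hfdef : ∀ x : F × F, f x = (p : ZMod (p ^ k)) ^ (k - 1) *
        (((Algebra.trace (ZMod p) F (α * x.1 * π x.2)).val : ℕ) : ZMod (p ^ k)) + g x.2) :
    (∀ a : F × F, ‖walshF p k F f a‖ = (p : ℝ) ^ (n : ℕ)) ∧
    ∀ a : F × F, walshF p k F f a = (p : ℂ) ^ (n : ℕ) *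
      zeta (p ^ k) ^
        ((-((p : ZMod (p ^ k)) ^ (k - 1) *
            (((Algebra.trace (ZMod p) F (a.2 * π.symm (α⁻¹ * a.1))).val : ℕ) : ZMod (p ^ k))) +
          g (π.symm (α⁻¹ * a.1))).val) := by
  classical
  have hp : p.Prime := Fact.out
  haveI : NeZero p := ⟨hp.pos.ne'⟩
  haveI : NeZero (p ^ k) := ⟨pow_ne_zero _ hp.pos.ne'⟩
  have hK1 : zeta (p ^ k) ^ (p ^ k) = 1 := (zeta_prim _ (NeZero.ne _)).pow_eq_one
  have hp1 : zeta p ^ p = 1 := (zeta_prim p (NeZero.ne p)).pow_eq_one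
  have main : ∀ a : F × F, walshF p k F f a = (p : ℂ) ^ (n : ℕ) *
      zeta (p ^ k) ^
        ((-((p : ZMod (p ^ k)) ^ (k - 1) *
            (((Algebra.trace (ZMod p) F (a.2 * π.symm (α⁻¹ * a.1))).val : ℕ) : ZMod (p ^ k))) +
          g (π.symm (α⁻¹ * a.1))).val) := by
    intro a
    set b : F := π.symm (α⁻¹ * a.1) with hb
    have hcond : ∀ x₂ : F, (α * π x₂ - a.1 = 0) ↔ x₂ = b := by
      intro x₂
      rw [sub_eq_zero, hb]
      constructor
      · intro h
        rw [← h, inv_mul_cancel_left₀ hα, Equiv.symm_apply_apply]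
      · intro h
        rw [h, Equiv.apply_symm_apply, mul_inv_cancel_left₀ hα]
    have hterm : ∀ x₁ x₂ : F,
        zeta (p ^ k) ^ (f (x₁, x₂)).val *
          zeta p ^ ((-(Algebra.trace (ZMod p) F (a.1 * x₁) +
            Algebra.trace (ZMod p) F (a.2 * x₂))).val)
        = zeta p ^ ((Algebra.trace (ZMod p) F ((α * π x₂ - a.1) * x₁)).val) *
          (zeta (p ^ k) ^ (g x₂).val *
            zeta p ^ ((-(Algebra.trace (ZMod p) F (a.2 * x₂))).val)) := by
      intro x₁ x₂
      have harg : Algebra.trace (ZMod p) F (α * x₁ * π x₂) +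
          -(Algebra.trace (ZMod p) F (a.1 * x₁))
          = Algebra.trace (ZMod p) F ((α * π x₂ - a.1) * x₁) := by
        rw [← map_neg, ← map_add]
        congr 1
        ring
      rw [hfdef (x₁, x₂), pow_val_add _ hK1, bridge p k hk, neg_add, pow_val_add _ hp1,
        mul_mul_mul_comm, ← pow_val_add _ hp1, harg]
    rw [walshF, Fintype.sum_prod_type, Finset.sum_comm]
    have hrw : ∀ x₂ : F, ∑ x₁ : F, zeta (p ^ k) ^ (f (x₁, x₂)).val *
          zeta p ^ ((-(Algebra.trace (ZMod p) F (a.1 * x₁) +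
            Algebra.trace (ZMod p) F (a.2 * x₂))).val)
        = (if x₂ = b then ((p : ℂ) ^ n) else 0) *
          (zeta (p ^ k) ^ (g x₂).val *
            zeta p ^ ((-(Algebra.trace (ZMod p) F (a.2 * x₂))).val)) := by
      intro x₂
      calc ∑ x₁ : F, zeta (p ^ k) ^ (f (x₁, x₂)).val *
            zeta p ^ ((-(Algebra.trace (ZMod p) F (a.1 * x₁) +
              Algebra.trace (ZMod p) F (a.2 * x₂))).val)
          = ∑ x₁ : F, zeta p ^ ((Algebra.trace (ZMod p) F ((α * π x₂ - a.1) * x₁)).val) *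
            (zeta (p ^ k) ^ (g x₂).val *
              zeta p ^ ((-(Algebra.trace (ZMod p) F (a.2 * x₂))).val)) :=
            Finset.sum_congr rfl (fun x₁ _ => hterm x₁ x₂)
        _ = (∑ x₁ : F, zeta p ^ ((Algebra.trace (ZMod p) F ((α * π x₂ - a.1) * x₁)).val)) *
            (zeta (p ^ k) ^ (g x₂).val *
              zeta p ^ ((-(Algebra.trace (ZMod p) F (a.2 * x₂))).val)) := by
            rw [Finset.sum_mul]
        _ = (if x₂ = b then ((p : ℂ) ^ n) else 0) *
            (zeta (p ^ k) ^ (g x₂).val *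
              zeta p ^ ((-(Algebra.trace (ZMod p) F (a.2 * x₂))).val)) := by
            rw [charsum p n F hcard (α * π x₂ - a.1)]
            congr 1
            simp only [hcond x₂]
    rw [Finset.sum_congr rfl (fun x₂ _ => hrw x₂)]
    simp only [ite_mul, zero_mul]
    rw [Finset.sum_ite_eq' Finset.univ b]
    simp only [Finset.mem_univ, if_true]
    -- now match RHS
    rw [pow_val_add _ hK1, neg_lift p k hk, bridge p k hk]
    ring
  refine ⟨fun a => ?_, main⟩
  rw [main a, norm_mul, norm_pow, norm_pow, Complex.norm_natCast]
  have h1 : ‖zeta (p ^ k)‖ = 1 := by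
    exact Complex.norm_eq_one_of_pow_eq_one hK1 (NeZero.ne _)
  rw [h1, one_pow, mul_one]
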